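/- Assume p = 2 and d = d2 > d1. If j2 = 1, then S_{f1,f2} contains an absolutely irreducible component defined over 𝔽_q. -/

import Mathlib

open MvPolynomial Finset

/-- The homogeneous polynomial `F` defining the hypersurface `S_{f1,f2}` for
`f1(X,Y) = Y + ∑ a_i X^i` and `f2(X,Y) = ∑ b_{i,j} X^i Y^j`, with
`d = max (deg f1) (deg f2)`. -/
noncomputable def SpolySpec {F : Type} [Field F] (a : ℕ → F) (b : ℕ → ℕ → F) (d : ℕ) :
    MvPolynomial (Fin 5) F :=
  (X 2 - X 4) ^ 2 * X 0 ^ (d - 1)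
  - (X 2 - X 4) * (∑ i ∈ Finset.range (d + 1), C (a i) * (X 3 ^ i - X 1 ^ i) * X 0 ^ (d - i))
  - (X 1 - X 3) * (∑ i ∈ Finset.range (d + 1), ∑ j ∈ Finset.range (d + 1),
      C (b i j) * (X 3 ^ i * X 4 ^ j - X 1 ^ i * X 2 ^ j) * X 0 ^ (d - i - j))

/-- `P` has a nonconstant divisor over `F` that stays irreducible over the algebraic
closure, i.e. the hypersurface `P = 0` contains an absolutely irreducible component
defined over `F`. -/
def HasAbsIrredComp {F : Type} [Field F] (P : MvPolynomial (Fin 5) F) : Prop :=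
  ∃ g : MvPolynomial (Fin 5) F, g ∣ P ∧ g.totalDegree ≠ 0 ∧
    Irreducible (MvPolynomial.map (algebraMap F (AlgebraicClosure F)) g)

/-! ### Auxiliary material -/

section PolyAux

variable {R : Type} [CommRing R] [IsDomain R]
open Polynomial

omit [IsDomain R] in
lemma quad_coeffs (p q r : R) :
    (Polynomial.C p * Polynomial.X ^ 2 + Polynomial.C q * Polynomial.X
        + Polynomial.C r).coeff 2 = p ∧
    (Polynomial.C p * Polynomial.X ^ 2 + Polynomial.C q * Polynomial.X
        + Polynomial.C r).coeff 1 = q ∧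
    (Polynomial.C p * Polynomial.X ^ 2 + Polynomial.C q * Polynomial.X
        + Polynomial.C r).coeff 0 = r := by
  refine ⟨?_, ?_, ?_⟩ <;>
    simp [Polynomial.coeff_add, Polynomial.coeff_C_mul, Polynomial.coeff_X_pow, Polynomial.coeff_C, Polynomial.coeff_X]

omit [IsDomain R] in
lemma quad_natDegree_le (p q r : R) :
    (Polynomial.C p * Polynomial.X ^ 2 + Polynomial.C q * Polynomial.X
      + Polynomial.C r).natDegree ≤ 2 := by
  apply Polynomial.natDegree_le_iff_coeff_eq_zero.mpr
  intro N hN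
  simp [Polynomial.coeff_add, Polynomial.coeff_C_mul, Polynomial.coeff_X_pow,
    Polynomial.coeff_C, Polynomial.coeff_X,
    show ¬(2 = N) by omega, show ¬(N = 0) by omega, show ¬(1 = N) by omega,
    show ¬(N = 2) by omega, show ¬(N = 1) by omega]

/-- no polynomial `Y` over a domain satisfies `Y^2 + qY = s + rX` with `r ≠ 0`. -/
lemma no_sol (q s r : R) (hr : r ≠ 0) (Y : R[X]) :
    Y * Y + Polynomial.C q * Y ≠ Polynomial.C s + Polynomial.C r * Polynomial.X := by
  intro h
  rcases Nat.eq_zero_or_pos Y.natDegree with hY | hY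
  · obtain ⟨c, rfl⟩ := Polynomial.natDegree_eq_zero.mp hY
    have h1 := congrArg (fun P => Polynomial.coeff P 1) h
    simp [Polynomial.coeff_C] at h1
    exact hr h1.symm
  · have hY0 : Y ≠ 0 := fun h0 => by simp [h0] at hY
    have h2 := congrArg (fun P => Polynomial.coeff P (Y.natDegree + Y.natDegree)) h
    have hlt : Y.natDegree < Y.natDegree + Y.natDegree := by omega
    simp only [Polynomial.coeff_add, Polynomial.coeff_mul_degree_add_degree, Polynomial.coeff_C_mul,
      Polynomial.coeff_eq_zero_of_natDegree_lt hlt, mul_zero, add_zero, Polynomial.coeff_C,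
      Polynomial.coeff_X] at h2
    rw [if_neg (by omega : ¬ Y.natDegree + Y.natDegree = 0),
      if_neg (by omega : ¬ (1 : ℕ) = Y.natDegree + Y.natDegree)] at h2
    simp only [mul_zero, zero_add, mul_one] at h2
    exact (mul_ne_zero (Polynomial.leadingCoeff_ne_zero.mpr hY0)
      (Polynomial.leadingCoeff_ne_zero.mpr hY0)) h2

/-- irreducibility criterion for a quadratic over a domain -/
lemma quad_irred (p q r : R) (hp : p ≠ 0)
    (hunit : ∀ g : R, g ∣ p → g ∣ q → g ∣ r → IsUnit g)
    (hnoZ : ∀ z : R, z * z + p * r ≠ q * z) :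
    Irreducible (Polynomial.C p * Polynomial.X ^ 2 + Polynomial.C q * Polynomial.X
      + Polynomial.C r) := by
  obtain ⟨hc2, hc1, hc0⟩ := quad_coeffs p q r
  have hΦne : (Polynomial.C p * Polynomial.X ^ 2 + Polynomial.C q * Polynomial.X
      + Polynomial.C r) ≠ 0 :=
    fun h => hp (by rw [h, Polynomial.coeff_zero] at hc2; exact hc2.symm)
  have hΦdeg : (Polynomial.C p * Polynomial.X ^ 2 + Polynomial.C q * Polynomial.X
      + Polynomial.C r).natDegree = 2 :=
    le_antisymm (quad_natDegree_le p q r) (Polynomial.le_natDegree_of_ne_zero (by rw [hc2]; exact hp))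
  constructor
  · intro hu
    have h0 := Polynomial.natDegree_eq_zero_of_isUnit hu
    omega
  · intro G H hGH
    by_contra hcon
    push_neg at hcon
    obtain ⟨hG, hH⟩ := hcon
    have hG0 : G ≠ 0 := fun h => hΦne (by rw [hGH, h, zero_mul])
    have hH0 : H ≠ 0 := fun h => hΦne (by rw [hGH, h, mul_zero])
    have hdeg : G.natDegree + H.natDegree = 2 := by
      rw [← Polynomial.natDegree_mul hG0 hH0, ← hGH, hΦdeg]
    have key : ∀ G' H' : R[X], (Polynomial.C p * Polynomial.X ^ 2 + Polynomial.C q * Polynomial.X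
        + Polynomial.C r) = G' * H' → G'.natDegree = 0 → ¬ IsUnit G' → False := by
      intro G' H' hGH' hdeg0 hG'
      obtain ⟨g, rfl⟩ := Polynomial.natDegree_eq_zero.mp hdeg0
      have hdvd : ∀ k, g ∣ ((Polynomial.C p * Polynomial.X ^ 2 + Polynomial.C q * Polynomial.X
          + Polynomial.C r)).coeff k := by
        intro k; rw [hGH', Polynomial.coeff_C_mul]; exact Dvd.intro _ rfl
      exact hG' (Polynomial.isUnit_C.mpr
        (hunit g (by rw [← hc2]; exact hdvd 2) (by rw [← hc1]; exact hdvd 1)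
          (by rw [← hc0]; exact hdvd 0)))
    rcases (by omega : G.natDegree = 0 ∨ H.natDegree = 0 ∨
        (G.natDegree = 1 ∧ H.natDegree = 1)) with h1 | h1 | ⟨h1, h2⟩
    · exact key G H hGH h1 hG
    · exact key H G (by rw [hGH, mul_comm]) h1 hH
    · have hGe := Polynomial.eq_X_add_C_of_natDegree_le_one h1.le
      have hHe := Polynomial.eq_X_add_C_of_natDegree_le_one h2.le
      set α := G.coeff 1; set β := G.coeff 0
      set γ := H.coeff 1; set δ := H.coeff 0
      have hexp : (Polynomial.C p * Polynomial.X ^ 2 + Polynomial.C q * Polynomial.X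
          + Polynomial.C r)
          = Polynomial.C (α * γ) * Polynomial.X ^ 2 + Polynomial.C (α * δ + β * γ) * Polynomial.X
            + Polynomial.C (β * δ) := by
        rw [hGH, hGe, hHe]; simp only [Polynomial.C_mul, Polynomial.C_add]; ring
      obtain ⟨kc2, kc1, kc0⟩ := quad_coeffs (α * γ) (α * δ + β * γ) (β * δ)
      rw [hexp] at hc2 hc1 hc0
      have hpp : p = α * γ := by rw [← hc2, kc2]
      have hqq : q = α * δ + β * γ := by rw [← hc1, kc1]
      have hrr : r = β * δ := by rw [← hc0, kc0]
      exact hnoZ (α * δ) (by rw [hpp, hqq, hrr]; ring)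

end PolyAux

section MvAux

variable {K : Type} [Field K]

lemma prime_transfer {R S : Type*} [CommMonoidWithZero R] [CommMonoidWithZero S]
    (e : R ≃* S) {x : R} (h : Prime (e x)) : Prime x := (MulEquiv.prime_iff e).mp h

lemma primeX0 (K : Type) [Field K] : Prime (MvPolynomial.X 0 : MvPolynomial (Fin 4) K) := by
  apply prime_transfer (MvPolynomial.finSuccEquiv K 3).toRingEquiv.toMulEquiv
  have h : (MvPolynomial.finSuccEquiv K 3).toRingEquiv.toMulEquiv (MvPolynomial.X 0)
      = Polynomial.X := by
    show MvPolynomial.finSuccEquiv K 3 (MvPolynomial.X 0) = Polynomial.X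
    simp [MvPolynomial.finSuccEquiv_X_zero]
  rw [h]; exact Polynomial.prime_X

/-- level-3 pieces (vars: 0 ↦ X0, 1 ↦ X1, 2 ↦ X3) -/
noncomputable def Sa3 (a : ℕ → K) (m : ℕ) : MvPolynomial (Fin 3) K :=
  ∑ i ∈ Finset.range (m + 3), C (a i) * (X 2 ^ i + X 1 ^ i) * X 0 ^ (m + 2 - i)

noncomputable def S03 (b : ℕ → ℕ → K) (m : ℕ) : MvPolynomial (Fin 3) K :=
  ∑ i ∈ Finset.range (m + 3), C (b i 0) * (X 2 ^ i + X 1 ^ i) * X 0 ^ (m + 2 - i)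

noncomputable def N13 (b : ℕ → ℕ → K) (m : ℕ) : MvPolynomial (Fin 3) K :=
  ∑ i ∈ Finset.range (m + 3), C (b i 1) * X 2 ^ i * X 0 ^ (m + 2 - i - 1)

noncomputable def M13 (b : ℕ → ℕ → K) (m : ℕ) : MvPolynomial (Fin 3) K :=
  ∑ i ∈ Finset.range (m + 3), C (b i 1) * X 1 ^ i * X 0 ^ (m + 2 - i - 1)

def f34 : Fin 3 → Fin 4 := ![0, 1, 3]

lemma rename_Sa3 {n : ℕ} (g : Fin 3 → Fin n) (a : ℕ → K) (m : ℕ) :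
    rename g (Sa3 a m)
      = ∑ i ∈ Finset.range (m + 3), C (a i) * (X (g 2) ^ i + X (g 1) ^ i) * X (g 0) ^ (m + 2 - i) := by
  simp [Sa3]

lemma rename_S03 {n : ℕ} (g : Fin 3 → Fin n) (b : ℕ → ℕ → K) (m : ℕ) :
    rename g (S03 b m)
      = ∑ i ∈ Finset.range (m + 3), C (b i 0) * (X (g 2) ^ i + X (g 1) ^ i) * X (g 0) ^ (m + 2 - i) := by
  simp [S03]

lemma rename_N13 {n : ℕ} (g : Fin 3 → Fin n) (b : ℕ → ℕ → K) (m : ℕ) :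
    rename g (N13 b m)
      = ∑ i ∈ Finset.range (m + 3), C (b i 1) * X (g 2) ^ i * X (g 0) ^ (m + 2 - i - 1) := by
  simp [N13]

lemma rename_M13 {n : ℕ} (g : Fin 3 → Fin n) (b : ℕ → ℕ → K) (m : ℕ) :
    rename g (M13 b m)
      = ∑ i ∈ Finset.range (m + 3), C (b i 1) * X (g 1) ^ i * X (g 0) ^ (m + 2 - i - 1) := by
  simp [M13]

lemma bsum_split (b : ℕ → ℕ → K) (m : ℕ) (hb2 : ∀ i j, b i j ≠ 0 → j ≤ 1) :
    ∑ i ∈ Finset.range (m + 3), ∑ j ∈ Finset.range (m + 3),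
        C (b i j) * ((X 3 : MvPolynomial (Fin 5) K) ^ i * X 4 ^ j - X 1 ^ i * X 2 ^ j) * X 0 ^ (m + 2 - i - j)
      = (∑ i ∈ Finset.range (m + 3), C (b i 0) * (X 3 ^ i - X 1 ^ i) * X 0 ^ (m + 2 - i))
        + ((∑ i ∈ Finset.range (m + 3), C (b i 1) * X 3 ^ i * X 0 ^ (m + 2 - i - 1)) * X 4
          - (∑ i ∈ Finset.range (m + 3), C (b i 1) * X 1 ^ i * X 0 ^ (m + 2 - i - 1)) * X 2) := by
  have h1 : ∀ i ∈ Finset.range (m + 3), ∑ j ∈ Finset.range (m + 3),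
      C (b i j) * ((X 3 : MvPolynomial (Fin 5) K) ^ i * X 4 ^ j - X 1 ^ i * X 2 ^ j) * X 0 ^ (m + 2 - i - j)
      = C (b i 0) * (X 3 ^ i - X 1 ^ i) * X 0 ^ (m + 2 - i)
        + (C (b i 1) * X 3 ^ i * X 0 ^ (m + 2 - i - 1) * X 4
           - C (b i 1) * X 1 ^ i * X 0 ^ (m + 2 - i - 1) * X 2) := by
    intro i _
    rw [← Finset.sum_subset (Finset.range_subset_range.mpr (by omega : 2 ≤ m + 3))
      (fun j _ hj2 => ?_)]
    · rw [Finset.sum_range_succ, Finset.sum_range_one]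
      simp only [pow_zero, pow_one, mul_one, Nat.sub_zero]
      ring
    · have hb : b i j = 0 := by
        by_contra hbne
        exact hj2 (Finset.mem_range.mpr (by have := hb2 i j hbne; omega))
      simp [hb]
  rw [Finset.sum_congr rfl h1, Finset.sum_add_distrib, Finset.sum_sub_distrib,
    ← Finset.sum_mul, ← Finset.sum_mul]

lemma decomp [CharP K 2] (a : ℕ → K) (b : ℕ → ℕ → K) (m : ℕ)
    (hb2 : ∀ i j, b i j ≠ 0 → j ≤ 1) :
    SpolySpec a b (m + 2) =
      rename Fin.castSucc ((X 0 : MvPolynomial (Fin 4) K) ^ (m + 1)) * X 4 ^ 2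
      + rename Fin.castSucc
          (rename f34 (Sa3 a m) + (X 1 + X 3) * rename f34 (N13 b m)) * X 4
      + rename Fin.castSucc
          (X 2 ^ 2 * X 0 ^ (m + 1) + X 2 * rename f34 (Sa3 a m)
            + (X 1 + X 3) * rename f34 (S03 b m)
            + (X 1 + X 3) * rename f34 (M13 b m) * X 2) := by
  have h2 : (2 : MvPolynomial (Fin 5) K) = 0 := by
    have := CharP.cast_eq_zero (MvPolynomial (Fin 5) K) 2
    exact_mod_cast this
  have hg0 : Fin.castSucc (f34 0) = (0 : Fin 5) := rfl
  have hg1 : Fin.castSucc (f34 1) = (1 : Fin 5) := rfl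
  have hg2 : Fin.castSucc (f34 2) = (3 : Fin 5) := rfl
  have hc0 : Fin.castSucc (0 : Fin 4) = (0 : Fin 5) := rfl
  have hc1 : Fin.castSucc (1 : Fin 4) = (1 : Fin 5) := rfl
  have hc2 : Fin.castSucc (2 : Fin 4) = (2 : Fin 5) := rfl
  have hc3 : Fin.castSucc (3 : Fin 4) = (3 : Fin 5) := rfl
  rw [SpolySpec]
  rw [show m + 2 + 1 = m + 3 from rfl, show m + 2 - 1 = m + 1 from rfl]
  rw [bsum_split b m hb2]
  simp only [map_add, map_mul, map_pow, map_sum, rename_X, rename_C,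
    rename_Sa3, rename_S03, rename_N13, rename_M13, hg0, hg1, hg2, hc0, hc1, hc2, hc3]
  simp only [CharTwo.sub_eq_add]
  linear_combination (X 2 * X 4 * X 0 ^ (m + 1) : MvPolynomial (Fin 5) K) * h2

def σ5 : Equiv.Perm (Fin 5) := ⟨![1, 2, 3, 4, 0], ![4, 0, 1, 2, 3], by decide, by decide⟩
def σ4 : Equiv.Perm (Fin 4) := ⟨![1, 2, 0, 3], ![2, 0, 1, 3], by decide, by decide⟩

noncomputable def e1 (K : Type) [Field K] :
    MvPolynomial (Fin 5) K ≃ₐ[K] Polynomial (MvPolynomial (Fin 4) K) :=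
  (renameEquiv K σ5).trans (MvPolynomial.finSuccEquiv K 4)

noncomputable def e2 (K : Type) [Field K] :
    MvPolynomial (Fin 4) K ≃ₐ[K] Polynomial (MvPolynomial (Fin 3) K) :=
  (renameEquiv K σ4).trans (MvPolynomial.finSuccEquiv K 3)

lemma fse_rename_succ (n : ℕ) (f : MvPolynomial (Fin n) K) :
    MvPolynomial.finSuccEquiv K n (MvPolynomial.rename Fin.succ f) = Polynomial.C f := by
  induction f using MvPolynomial.induction_on with
  | C c => simp [MvPolynomial.finSuccEquiv_apply]
  | add p q hp hq => simp [map_add, hp, hq]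
  | mul_X p i hp => simp [hp, MvPolynomial.finSuccEquiv_X_succ]

lemma e1_renameCastSucc (f : MvPolynomial (Fin 4) K) :
    e1 K (rename Fin.castSucc f) = Polynomial.C f := by
  show MvPolynomial.finSuccEquiv K 4 (renameEquiv K σ5 (rename Fin.castSucc f)) = _
  rw [renameEquiv_apply, rename_rename,
    show ((σ5 : Fin 5 → Fin 5) ∘ Fin.castSucc) = (Fin.succ : Fin 4 → Fin 5) from
      funext (by decide)]
  exact fse_rename_succ 4 f

lemma e1_X4 : e1 K (X 4) = Polynomial.X := by
  show MvPolynomial.finSuccEquiv K 4 (renameEquiv K σ5 (X 4)) = _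
  rw [renameEquiv_apply, rename_X, show (σ5 4) = (0 : Fin 5) from rfl,
    MvPolynomial.finSuccEquiv_X_zero]

lemma e2_renamef34 (f : MvPolynomial (Fin 3) K) :
    e2 K (rename f34 f) = Polynomial.C f := by
  show MvPolynomial.finSuccEquiv K 3 (renameEquiv K σ4 (rename f34 f)) = _
  rw [renameEquiv_apply, rename_rename,
    show ((σ4 : Fin 4 → Fin 4) ∘ f34) = (Fin.succ : Fin 3 → Fin 4) from funext (by decide)]
  exact fse_rename_succ 3 f

lemma e2_X2 : e2 K (X 2) = Polynomial.X := by
  show MvPolynomial.finSuccEquiv K 3 (renameEquiv K σ4 (X 2)) = _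
  rw [renameEquiv_apply, rename_X, show (σ4 2) = (0 : Fin 4) from rfl,
    MvPolynomial.finSuccEquiv_X_zero]

lemma e1_decomp [CharP K 2] (a : ℕ → K) (b : ℕ → ℕ → K) (m : ℕ)
    (hb2 : ∀ i j, b i j ≠ 0 → j ≤ 1) :
    e1 K (SpolySpec a b (m + 2)) =
      Polynomial.C ((X 0 : MvPolynomial (Fin 4) K) ^ (m + 1)) * Polynomial.X ^ 2
      + Polynomial.C (rename f34 (Sa3 a m) + (X 1 + X 3) * rename f34 (N13 b m)) * Polynomial.X
      + Polynomial.C (X 2 ^ 2 * X 0 ^ (m + 1) + X 2 * rename f34 (Sa3 a m)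
          + (X 1 + X 3) * rename f34 (S03 b m)
          + (X 1 + X 3) * rename f34 (M13 b m) * X 2) := by
  rw [decomp a b m hb2]
  simp only [map_add, map_mul, map_pow, e1_renameCastSucc, e1_X4 (K := K)]

end MvAux

section EvalComp
variable {K : Type} [Field K]

/-- evaluation 1 (3 vars): x0 = 0, x1 = 0, x3 = X -/
noncomputable def pt3 (K : Type) [Field K] : Fin 3 → Polynomial K := ![0, 0, Polynomial.X]

@[simp] lemma pt3_0 : pt3 K 0 = 0 := rfl
@[simp] lemma pt3_1 : pt3 K 1 = 0 := rfl
@[simp] lemma pt3_2 : pt3 K 2 = Polynomial.X := rfl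

lemma aeval_Sa3 (a : ℕ → K) (m : ℕ) :
    aeval (pt3 K) (Sa3 a m) = Polynomial.C (a (m + 2)) * Polynomial.X ^ (m + 2) := by
  simp only [Sa3, map_sum, map_mul, map_add, map_pow, aeval_X, aeval_C,
    Polynomial.algebraMap_eq, pt3_0, pt3_1, pt3_2]
  rw [Finset.sum_eq_single (m + 2)]
  · rw [zero_pow (by omega : m + 2 ≠ 0), add_zero, Nat.sub_self, pow_zero, mul_one]
  · intro i hi hne
    rw [zero_pow (by simp only [Finset.mem_range] at hi; omega : m + 2 - i ≠ 0), mul_zero]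
  · intro h; exact absurd (Finset.mem_range.mpr (by omega)) h

lemma aeval_S03 (b : ℕ → ℕ → K) (m : ℕ) :
    aeval (pt3 K) (S03 b m) = Polynomial.C (b (m + 2) 0) * Polynomial.X ^ (m + 2) := by
  simp only [S03, map_sum, map_mul, map_add, map_pow, aeval_X, aeval_C,
    Polynomial.algebraMap_eq, pt3_0, pt3_1, pt3_2]
  rw [Finset.sum_eq_single (m + 2)]
  · rw [zero_pow (by omega : m + 2 ≠ 0), add_zero, Nat.sub_self, pow_zero, mul_one]
  · intro i hi hne
    rw [zero_pow (by simp only [Finset.mem_range] at hi; omega : m + 2 - i ≠ 0), mul_zero]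
  · intro h; exact absurd (Finset.mem_range.mpr (by omega)) h

lemma aeval_N13 (b : ℕ → ℕ → K) (m : ℕ) (htop : b (m + 2) 1 = 0) :
    aeval (pt3 K) (N13 b m) = Polynomial.C (b (m + 1) 1) * Polynomial.X ^ (m + 1) := by
  simp only [N13, map_sum, map_mul, map_add, map_pow, aeval_X, aeval_C,
    Polynomial.algebraMap_eq, pt3_0, pt3_1, pt3_2]
  rw [show m + 3 = (m + 1) + 1 + 1 from rfl, Finset.sum_range_succ, Finset.sum_range_succ,
    Finset.sum_eq_zero (fun i hi => by
      rw [zero_pow (by simp only [Finset.mem_range] at hi; omega : m + 2 - i - 1 ≠ 0), mul_zero])]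
  simp [htop]

lemma aeval_M13 (b : ℕ → ℕ → K) (m : ℕ) :
    aeval (pt3 K) (M13 b m) = 0 := by
  simp only [M13, map_sum, map_mul, map_add, map_pow, aeval_X, aeval_C,
    Polynomial.algebraMap_eq, pt3_0, pt3_1, pt3_2]
  apply Finset.sum_eq_zero
  intro i hi
  rcases Nat.eq_zero_or_pos i with h0 | h0
  · subst h0; rw [zero_pow (by omega : m + 2 - 0 - 1 ≠ 0), mul_zero]
  · rw [zero_pow (by omega : i ≠ 0), mul_zero, zero_mul]

/-- evaluation 2 (3 vars): x0 = 1, x1 = X, x3 = 0 -/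
noncomputable def pt3' (K : Type) [Field K] : Fin 3 → Polynomial K := ![1, Polynomial.X, 0]

@[simp] lemma pt3'_0 : pt3' K 0 = 1 := rfl
@[simp] lemma pt3'_1 : pt3' K 1 = Polynomial.X := rfl
@[simp] lemma pt3'_2 : pt3' K 2 = 0 := rfl

lemma aeval_M13' (b : ℕ → ℕ → K) (m : ℕ) :
    aeval (pt3' K) (M13 b m) = ∑ i ∈ Finset.range (m + 3), Polynomial.C (b i 1) * Polynomial.X ^ i := by
  simp only [M13, map_sum, map_mul, map_add, map_pow, aeval_X, aeval_C,
    Polynomial.algebraMap_eq, pt3'_0, pt3'_1, pt3'_2, one_pow, mul_one]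

lemma aeval_N13' (b : ℕ → ℕ → K) (m : ℕ) (hb01 : b 0 1 = 0) :
    aeval (pt3' K) (N13 b m) = 0 := by
  simp only [N13, map_sum, map_mul, map_add, map_pow, aeval_X, aeval_C,
    Polynomial.algebraMap_eq, pt3'_0, pt3'_1, pt3'_2, one_pow, mul_one]
  apply Finset.sum_eq_zero
  intro i hi
  rcases Nat.eq_zero_or_pos i with h0 | h0
  · subst h0; simp [hb01]
  · rw [zero_pow (by omega : i ≠ 0), mul_zero]

lemma MN_ne_zero (b : ℕ → ℕ → K) (m : ℕ) (hb01 : b 0 1 = 0)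
    (hbex : ∃ i, b i 1 ≠ 0) (hbd : ∀ i j, b i j ≠ 0 → i + j ≤ m + 2) :
    M13 b m + N13 b m ≠ 0 := by
  obtain ⟨i2, hi2⟩ := hbex
  have hle : i2 ≤ m + 1 := by have := hbd i2 1 hi2; omega
  intro h0
  have := congrArg (fun t => (aeval (pt3' K) t).coeff i2) h0
  simp only [map_add, aeval_M13', aeval_N13' b m hb01, add_zero, map_zero,
    Polynomial.coeff_zero, Polynomial.finset_sum_coeff, Polynomial.coeff_C_mul,
    Polynomial.coeff_X_pow] at this
  rw [Finset.sum_eq_single i2 (fun i _ hne => by rw [if_neg (fun hh => hne hh.symm), mul_zero])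
    (fun h => absurd (Finset.mem_range.mpr (by omega)) h), if_pos rfl, mul_one] at this
  exact hi2 this

lemma v3_ne_zero : (X 1 + X 2 : MvPolynomial (Fin 3) K) ≠ 0 := by
  intro h0
  have := congrArg (aeval (pt3' K)) h0
  simp at this

/-- evaluation (4 vars): x0 = 0, x1 = 0, x2 = 0, x3 = X -/
noncomputable def pt4 (K : Type) [Field K] : Fin 4 → Polynomial K := ![0, 0, 0, Polynomial.X]

@[simp] lemma pt4_0 : pt4 K 0 = 0 := rfl
@[simp] lemma pt4_1 : pt4 K 1 = 0 := rfl
@[simp] lemma pt4_2 : pt4 K 2 = 0 := rfl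
@[simp] lemma pt4_3 : pt4 K 3 = Polynomial.X := rfl

lemma pt4_comp : pt4 K ∘ f34 = pt3 K := by
  funext i; fin_cases i <;> rfl

end EvalComp

section Main
variable {K : Type} [Field K]

theorem main_irred [CharP K 2] (a : ℕ → K) (b : ℕ → ℕ → K) (m : ℕ)
    (ha : ∀ i, a i ≠ 0 → i ≤ m + 1)
    (hb2 : ∀ i j, b i j ≠ 0 → j ≤ 1)
    (hbd : ∀ i j, b i j ≠ 0 → i + j ≤ m + 2)
    (hb01 : b 0 1 = 0)
    (htop : b (m + 2) 0 ≠ 0 ∨ b (m + 1) 1 ≠ 0)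
    (hbex : ∃ i, b i 1 ≠ 0) :
    Irreducible (SpolySpec a b (m + 2)) := by
  have hb21 : b (m + 2) 1 = 0 := by
    by_contra h; have := hbd _ _ h; omega
  have ha2 : a (m + 2) = 0 := by
    by_contra h; have := ha _ h; omega
  apply (MulEquiv.irreducible_iff (e1 K)).mp
  rw [e1_decomp a b m hb2]
  apply quad_irred
  · exact pow_ne_zero _ (MvPolynomial.X_ne_zero 0)
  · -- no common divisor
    intro g hgp hgq hgr
    by_contra hg
    obtain ⟨i, hi, hass⟩ := (dvd_prime_pow (primeX0 K) (m + 1)).mp hgp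
    rcases Nat.eq_zero_or_pos i with rfl | hipos
    · exact hg (associated_one_iff_isUnit.mp (by simpa using hass))
    · have hX0g : (X 0 : MvPolynomial (Fin 4) K) ∣ g :=
        (dvd_pow_self (X 0 : MvPolynomial (Fin 4) K) (by omega : i ≠ 0)).trans hass.symm.dvd
      rcases htop with hb0 | hb1
      · obtain ⟨w, hw⟩ := hX0g.trans hgr
        have heq := congrArg (aeval (pt4 K)) hw
        simp only [map_add, map_mul, map_pow, aeval_X, aeval_rename, pt4_comp,
          aeval_Sa3, aeval_S03, aeval_M13, pt4_0, pt4_1, pt4_2, pt4_3, ha2, map_zero,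
          zero_mul, mul_zero, zero_add, add_zero, zero_pow (by omega : m + 1 ≠ 0)] at heq
        have : (Polynomial.X : Polynomial K) * (Polynomial.C (b (m + 2) 0) * Polynomial.X ^ (m + 2)) ≠ 0 :=
          mul_ne_zero Polynomial.X_ne_zero
            (mul_ne_zero (Polynomial.C_ne_zero.mpr hb0) (pow_ne_zero _ Polynomial.X_ne_zero))
        exact this heq
      · obtain ⟨w, hw⟩ := hX0g.trans hgq
        have heq := congrArg (aeval (pt4 K)) hw
        simp only [map_add, map_mul, map_pow, aeval_X, aeval_rename, pt4_comp,
          aeval_Sa3, aeval_N13 b m hb21, pt4_0, pt4_1, pt4_2, pt4_3, ha2, map_zero,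
          zero_mul, mul_zero, zero_add, add_zero] at heq
        have : (Polynomial.X : Polynomial K) * (Polynomial.C (b (m + 1) 1) * Polynomial.X ^ (m + 1)) ≠ 0 :=
          mul_ne_zero Polynomial.X_ne_zero
            (mul_ne_zero (Polynomial.C_ne_zero.mpr hb1) (pow_ne_zero _ Polynomial.X_ne_zero))
        exact this heq
  · -- no root of the quadratic
    intro z h
    have h2 : (2 : MvPolynomial (Fin 4) K) = 0 := by
      have := CharP.cast_eq_zero (MvPolynomial (Fin 4) K) 2
      exact_mod_cast this
    have hf0 : f34 0 = 0 := rfl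
    have hf1 : f34 1 = 1 := rfl
    have hf2 : f34 2 = 3 := rfl
    have hY : (z + rename f34 ((X 0 : MvPolynomial (Fin 3) K) ^ (m + 1)) * X 2)
          * (z + rename f34 ((X 0 : MvPolynomial (Fin 3) K) ^ (m + 1)) * X 2)
        + rename f34 (Sa3 a m + (X 1 + X 2) * N13 b m)
          * (z + rename f34 ((X 0 : MvPolynomial (Fin 3) K) ^ (m + 1)) * X 2)
      = rename f34 ((X 0 : MvPolynomial (Fin 3) K) ^ (m + 1) * (X 1 + X 2) * S03 b m)
        + rename f34 ((X 0 : MvPolynomial (Fin 3) K) ^ (m + 1) * (X 1 + X 2) * (M13 b m + N13 b m))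
          * X 2 := by
      simp only [map_add, map_mul, map_pow, rename_X, hf0, hf1, hf2]
      linear_combination h + ((rename f34 (Sa3 a m) + (X 1 + X 3) * rename f34 (N13 b m)) * z
        + z * X 0 ^ (m + 1) * X 2
        - X 0 ^ (m + 1) * (X 1 + X 3) * rename f34 (S03 b m)
        - X 0 ^ (m + 1) * (X 1 + X 3) * rename f34 (M13 b m) * X 2) * h2
    have hFin := congrArg (e2 K) hY
    simp only [map_add, map_mul, e2_renamef34, e2_X2] at hFin
    simp only [← Polynomial.C_mul, ← Polynomial.C_add] at hFin
    exact no_sol (Sa3 a m + (X 1 + X 2) * N13 b m)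
      ((X 0 : MvPolynomial (Fin 3) K) ^ (m + 1) * (X 1 + X 2) * S03 b m)
      ((X 0 : MvPolynomial (Fin 3) K) ^ (m + 1) * (X 1 + X 2) * (M13 b m + N13 b m))
      (mul_ne_zero (mul_ne_zero (pow_ne_zero _ (MvPolynomial.X_ne_zero 0)) v3_ne_zero)
        (MN_ne_zero b m hb01 hbex hbd))
      (e2 K z + Polynomial.C ((X 0 : MvPolynomial (Fin 3) K) ^ (m + 1)) * Polynomial.X)
      hFin

end Main

theorem stmt_7
    (p ℓ : ℕ) (hp : p.Prime) (hℓ : 0 < ℓ)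
    (F : Type) [Field F] [Fintype F] [CharP F p]
    (hcard : Fintype.card F = p ^ ℓ)
    (a : ℕ → F) (b : ℕ → ℕ → F)
    (ha0 : a 0 = 0) (hb00 : b 0 0 = 0) (hb01 : b 0 1 = 0)
    (d1 d2 d : ℕ)
    (hd1pos : 1 ≤ d1)
    (hd1ub : ∀ i, a i ≠ 0 → i ≤ d1)
    (hd1max : d1 ≠ 1 → a d1 ≠ 0)
    (hd2ub : ∀ i j, b i j ≠ 0 → i + j ≤ d2)
    (hd2max : ∃ i j, i + j = d2 ∧ b i j ≠ 0)
    (hd : d = max d1 d2)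
    (j2 : ℕ)
    (hj2ex : ∃ i, b i j2 ≠ 0) (hj2ub : ∀ i j, b i j ≠ 0 → j ≤ j2)
    (hp2 : p = 2) (hdd : d1 < d2) (hj2v : j2 = 1) :
    HasAbsIrredComp (SpolySpec a b d) := by
  subst hp2
  subst hj2v
  have hd2v : d = d2 := by rw [hd]; exact max_eq_right hdd.le
  obtain ⟨m, hm⟩ : ∃ m, d = m + 2 := ⟨d - 2, by omega⟩
  subst hm
  set K := AlgebraicClosure F with hK
  have hinj : Function.Injective (algebraMap F K) := (algebraMap F K).injective
  haveI : CharP K 2 := charP_of_injective_algebraMap hinj 2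
  have hψ : ∀ x : F, algebraMap F K x = 0 → x = 0 := fun x hx => hinj (by rw [hx, map_zero])
  set a' : ℕ → K := fun i => algebraMap F K (a i) with ha'
  set b' : ℕ → ℕ → K := fun i j => algebraMap F K (b i j) with hb'
  have hmap : MvPolynomial.map (algebraMap F K) (SpolySpec a b (m + 2))
      = SpolySpec a' b' (m + 2) := by
    simp only [SpolySpec, map_sub, map_mul, map_add, map_pow, map_sum,
      MvPolynomial.map_C, MvPolynomial.map_X]
    rfl
  have hirr : Irreducible (MvPolynomial.map (algebraMap F K) (SpolySpec a b (m + 2))) := by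
    rw [hmap]
    apply main_irred a' b' m
    · intro i hi
      have : a i ≠ 0 := fun h => hi (by simp [ha', h])
      have := hd1ub i this
      omega
    · intro i j hij
      exact hj2ub i j (fun h => hij (by simp [hb', h]))
    · intro i j hij
      have := hd2ub i j (fun h => hij (by simp [hb', h]))
      omega
    · simp [hb', hb01]
    · obtain ⟨i0, j0, hij0, hbne⟩ := hd2max
      have hj0 : j0 ≤ 1 := hj2ub _ _ hbne
      rcases Nat.le_one_iff_eq_zero_or_eq_one.mp hj0 with rfl | rfl
      · left
        have : i0 = m + 2 := by omega
        subst this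
        exact fun h => hbne (hψ _ h)
      · right
        have : i0 = m + 1 := by omega
        subst this
        exact fun h => hbne (hψ _ h)
    · obtain ⟨i2, hi2⟩ := hj2ex
      exact ⟨i2, fun h => hi2 (hψ _ h)⟩
  refine ⟨SpolySpec a b (m + 2), dvd_refl _, ?_, hirr⟩
  intro h0
  have hall := (MvPolynomial.totalDegree_eq_zero_iff _ (SpolySpec a b (m + 2))).mp h0
  have hC : SpolySpec a b (m + 2)
      = MvPolynomial.C ((SpolySpec a b (m + 2)).coeff 0) := by
    apply MvPolynomial.ext
    intro mo
    rcases eq_or_ne mo 0 with rfl | hmo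
    · simp
    · rw [MvPolynomial.coeff_C, if_neg (by exact fun h => hmo h.symm)]
      by_contra hne
      exact hmo (Finsupp.ext (hall mo (MvPolynomial.mem_support_iff.mpr hne)))
  rcases eq_or_ne ((SpolySpec a b (m + 2)).coeff 0) 0 with hz | hz
  · rw [hC, hz, map_zero, map_zero] at hirr
    exact not_irreducible_zero hirr
  · have hu : IsUnit (MvPolynomial.map (algebraMap F K) (SpolySpec a b (m + 2))) := by
      rw [hC, MvPolynomial.map_C]
      exact IsUnit.map MvPolynomial.C
        (isUnit_iff_ne_zero.mpr (fun h => hz (hψ _ h)))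
    exact hirr.not_isUnit hu
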